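/- Let n ≥ 1, let c ∈ Mat_n, and let α ∈ ℂ. Suppose y, h : ℂ → Mat_n are differentiable (with y twice differentiable), y(z) is invertible for every z, and the system −y'(z) = y(z)² + 2 h(z) y(z) + 2z·y(z) + 2c and h'(z) = h(z)² + y(z) h(z) + h(z) y(z) + 2z·h(z) + (α − 1)·I holds for all z. Then y satisfies the matrix Painlevé IV equation: y''(z) = (1/2)(y'(z) + 2c)·y(z)⁻¹·(y'(z) − 2c) + (1/2)[y(z), y'(z)] + (3/2) y(z)³ + 4z·y(z)² + 2(z² − α)·y(z) + c·y(z) + y(z)·c for all z. -/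

import Mathlib

attribute [local instance] Matrix.normedAddCommGroup Matrix.normedSpace

noncomputable def mulCLM (n : ℕ) : Matrix (Fin n) (Fin n) ℂ →L[ℂ] Matrix (Fin n) (Fin n) ℂ →L[ℂ] Matrix (Fin n) (Fin n) ℂ :=
  LinearMap.toContinuousLinearMap
    { toFun := fun a => LinearMap.toContinuousLinearMap (LinearMap.mul ℂ _ a)
      map_add' := by intro a b; ext x; simp [add_mul]
      map_smul' := by intro r a; ext x; simp [smul_mul_assoc] }

lemma HasDerivAt.matMul {n : ℕ} {f g : ℂ → Matrix (Fin n) (Fin n) ℂ} {f' g' : Matrix (Fin n) (Fin n) ℂ} {z : ℂ}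
    (hf : HasDerivAt f f' z) (hg : HasDerivAt g g' z) :
    HasDerivAt (fun w => f w * g w) (f' * g z + f z * g') z := by
  letI : NormedAddCommGroup (Matrix (Fin n) (Fin n) ℂ →L[ℂ] Matrix (Fin n) (Fin n) ℂ) :=
    ContinuousLinearMap.toNormedAddCommGroup
  letI : NormedSpace ℂ (Matrix (Fin n) (Fin n) ℂ →L[ℂ] Matrix (Fin n) (Fin n) ℂ) :=
    ContinuousLinearMap.toNormedSpace
  exact ((mulCLM n).hasFDerivAt.comp_hasDerivAt z hf).clm_apply hg

/-- eliminating `h` from the system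
`−y' = y² + 2hy + 2zy + 2c`, `h' = h² + yh + hy + 2zh + (α−1)I`
yields the matrix Painlevé IV equation
`y'' = ½(y'+2c) y⁻¹ (y'−2c) + ½[y,y'] + 3/2 y³ + 4zy² + 2(z²−α)y + cy + yc`. -/
theorem matrixP4_from_system (n : ℕ) (hn : 1 ≤ n)
    (c : Matrix (Fin n) (Fin n) ℂ) (α : ℂ)
    (y h : ℂ → Matrix (Fin n) (Fin n) ℂ)
    (hy : Differentiable ℂ y) (hy' : Differentiable ℂ (deriv y))
    (hh : Differentiable ℂ h)
    (hinv : ∀ z : ℂ, IsUnit (y z))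
    (hyeq : ∀ z : ℂ, -(deriv y z) =
      (y z)^2 + 2 * (h z * y z) + (2 * z) • y z + 2 * c)
    (hheq : ∀ z : ℂ, deriv h z =
      (h z)^2 + y z * h z + h z * y z + (2 * z) • h z
        + (α - 1) • (1 : Matrix (Fin n) (Fin n) ℂ)) :
    ∀ z : ℂ, deriv (deriv y) z =
      (1/2 : ℂ) • ((deriv y z + 2 * c) * (y z)⁻¹ * (deriv y z - 2 * c))
        + (1/2 : ℂ) • (y z * deriv y z - deriv y z * y z)
        + (3/2 : ℂ) • (y z)^3 + (4 * z) • (y z)^2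
        + (2 * (z^2 - α)) • y z + c * y z + y z * c := by
  have hdy_eq : deriv y = fun w => -((y w)^2 + 2 * (h w * y w) + (2 * w) • y w + 2 * c) :=
    funext fun w => by rw [← hyeq w, neg_neg]
  intro z
  have hdet : IsUnit (y z).det := (Matrix.isUnit_iff_isUnit_det (y z)).mp (hinv z)
  have h1 : y z * (y z)⁻¹ = 1 := Matrix.mul_nonsing_inv (y z) hdet
  have h2 : (y z)⁻¹ * y z = 1 := Matrix.nonsing_inv_mul (y z) hdet
  have k3 : ∀ x : Matrix (Fin n) (Fin n) ℂ, (y z)⁻¹ * (y z * x) = x := fun x => by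
    rw [← mul_assoc, h2, one_mul]
  have k4 : ∀ x : Matrix (Fin n) (Fin n) ℂ, y z * ((y z)⁻¹ * x) = x := fun x => by
    rw [← mul_assoc, h1, one_mul]
  -- derivative facts
  have hyA : HasDerivAt y (deriv y z) z := (hy z).hasDerivAt
  have hhA : HasDerivAt h (deriv h z) z := (hh z).hasDerivAt
  have hsq : HasDerivAt (fun w => (y w)^2) (deriv y z * y z + y z * deriv y z) z := by
    have := hyA.matMul hyA
    simpa only [← pow_two] using this
  have ht2 : HasDerivAt (fun w => 2 * (h w * y w))
      ((0 : Matrix (Fin n) (Fin n) ℂ) * (h z * y z) + 2 * (deriv h z * y z + h z * deriv y z)) z :=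
    (hasDerivAt_const z 2).matMul (hhA.matMul hyA)
  have ht3 : HasDerivAt (fun w => (2 * w) • y w)
      ((2 * z) • deriv y z + ((2 : ℂ) * 1) • y z) z :=
    HasDerivAt.smul ((hasDerivAt_id z).const_mul (2 : ℂ)) hyA
  have hY2 : deriv (deriv y) z =
      -((deriv y z * y z + y z * deriv y z)
        + ((0 : Matrix (Fin n) (Fin n) ℂ) * (h z * y z) + 2 * (deriv h z * y z + h z * deriv y z))
        + ((2 * z) • deriv y z + ((2 : ℂ) * 1) • y z) + 0) := by
    conv_lhs => rw [hdy_eq]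
    exact ((((hsq.add ht2).add ht3).add (hasDerivAt_const z (2 * c))).neg).deriv
  -- algebra
  have e2 : h z * y z = (1/2 : ℂ) • (-(deriv y z) - (y z)^2 - (2*z) • y z - 2*c) := by
    have h2' : h z * y z + h z * y z = -(deriv y z) - (y z)^2 - (2*z) • y z - 2*c := by
      rw [hyeq z]; noncomm_ring
    calc h z * y z = (1/2 : ℂ) • (h z * y z + h z * y z) := by
          rw [← two_smul ℂ, smul_smul]; norm_num
      _ = _ := by rw [h2']
  have hH : h z = (1/2 : ℂ) • ((-(deriv y z) - (y z)^2 - (2*z) • y z - 2*c) * (y z)⁻¹) := by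
    calc h z = (h z * y z) * (y z)⁻¹ := by rw [mul_assoc, h1, mul_one]
      _ = _ := by rw [e2, smul_mul_assoc]
  rw [hheq z] at hY2
  rw [hY2, hH]
  simp only [pow_succ, pow_zero, one_mul, mul_add, add_mul, mul_sub, sub_mul, neg_mul, mul_neg,
    smul_mul_assoc, mul_smul_comm, mul_assoc, mul_one, zero_mul, add_zero, smul_add, smul_sub,
    smul_neg, smul_smul, two_mul, h1, h2, k3, k4]
  module
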